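/- Let G be a set and 𝓕 a family of subsets of G. Then 𝓕 has finite VC-dimension if and only if 𝓕 has finite dual VC-dimension, where the dual VC-dimension is the supremum of integers n such that there exist X₁,…,Xₙ ∈ 𝓕 for which all 2ⁿ cells of the Venn diagram ⋂_{i∈I} Xᵢ ∩ ⋂_{i∉I} Xᵢᶜ (I ⊆ {1,…,n}) are non-empty. -/
import Mathlib


open Set

def Shatters {G : Type*} (𝓕 : Set (Set G)) (A : Finset G) : Prop :=
  ∀ B ⊆ A, ∃ S ∈ 𝓕, S ∩ (A : Set G) = (B : Set G)

/-- A family of sets has finite VC-dimension iff it has finite dual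
VC-dimension (all `2ⁿ` Venn cells of some `n` sets from the family are nonempty
only for boundedly many `n`). -/
theorem finiteVC_iff_finite_dual_VC {G : Type*} (𝓕 : Set (Set G)) :
    (∃ n : ℕ, ∀ A : Finset G, Shatters 𝓕 A → A.card ≤ n) ↔
    (∃ n : ℕ, ∀ (m : ℕ) (X : Fin m → Set G),
      (∀ i, X i ∈ 𝓕) →
      (∀ I : Set (Fin m), ∃ x : G, ∀ i, x ∈ X i ↔ i ∈ I) →
      m ≤ n) := by
  classical
  constructor
  · rintro ⟨n, hn⟩
    refine ⟨2 ^ (n + 1), fun m X hX hcells => ?_⟩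
    by_contra hm
    push_neg at hm
    set k := n + 1 with hk
    have hcard : Fintype.card (Finset (Fin k)) ≤ Fintype.card (Fin m) := by
      simp only [Fintype.card_finset, Fintype.card_fin]
      omega
    obtain ⟨e⟩ := Function.Embedding.nonempty_of_card_le hcard
    choose a ha using fun i : Fin k => hcells (e '' {S | i ∈ S})
    -- membership criterion
    have key : ∀ (i : Fin k) (T : Finset (Fin k)), a i ∈ X (e T) ↔ i ∈ T := by
      intro i T
      rw [ha i (e T)]
      constructor
      · rintro ⟨S, hS, hST⟩
        rwa [e.injective hST] at hS
      · intro hi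
        exact ⟨T, hi, rfl⟩
    have ainj : Function.Injective a := by
      intro i j hij
      by_contra hne
      have h1 : a i ∈ X (e {i}) := (key i {i}).2 (Finset.mem_singleton_self i)
      rw [hij] at h1
      have h2 := (key j {i}).1 h1
      exact hne ((Finset.mem_singleton.1 h2)).symm
    set A : Finset G := Finset.image a Finset.univ with hA
    have hAcard : A.card = k := by
      rw [hA, Finset.card_image_of_injective _ ainj, Finset.card_univ, Fintype.card_fin]
    have hshat : Shatters 𝓕 A := by
      intro B hB
      set T : Finset (Fin k) := Finset.univ.filter (fun i => a i ∈ B) with hT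
      refine ⟨X (e T), hX _, ?_⟩
      ext x
      constructor
      · rintro ⟨hx1, hx2⟩
        simp only [hA, Finset.coe_image, Finset.coe_univ, Set.image_univ, Set.mem_range] at hx2
        obtain ⟨i, rfl⟩ := hx2
        have := (key i T).1 hx1
        rw [hT, Finset.mem_filter] at this
        exact this.2
      · intro hx
        have hxA : x ∈ (A : Set G) := hB hx
        simp only [hA, Finset.coe_image, Finset.coe_univ, Set.image_univ, Set.mem_range] at hxA
        obtain ⟨i, rfl⟩ := hxA
        refine ⟨(key i T).2 ?_, hB hx⟩
        rw [hT, Finset.mem_filter]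
        exact ⟨Finset.mem_univ i, hx⟩
    have := hn A hshat
    omega
  · rintro ⟨n, hn⟩
    refine ⟨2 ^ (n + 1), fun A hA => ?_⟩
    by_contra hm
    push_neg at hm
    set k := n + 1 with hk
    obtain ⟨A', hA'sub, hA'card⟩ := Finset.exists_subset_card_eq (le_of_lt hm)
    have hcard : Fintype.card (Finset (Fin k)) = Fintype.card {x // x ∈ A'} := by
      rw [Fintype.card_finset, Fintype.card_fin, Fintype.card_coe, hA'card]
    let e : Finset (Fin k) ≃ {x // x ∈ A'} := Fintype.equivOfCardEq hcard
    have einj : Function.Injective (fun S : Finset (Fin k) => ((e S : G))) := by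
      intro S T hST
      exact e.injective (Subtype.val_injective hST)
    set B : Fin k → Finset G :=
      fun i => (Finset.univ.filter (fun S : Finset (Fin k) => i ∈ S)).image
        (fun S => (e S : G)) with hBdef
    have hBsub : ∀ i, B i ⊆ A := by
      intro i x hx
      simp only [hBdef, Finset.mem_image] at hx
      obtain ⟨S, _, rfl⟩ := hx
      exact hA'sub (e S).2
    choose X hX1 hX2 using fun i => hA (B i) (hBsub i)
    have hle := hn k X hX1 ?_
    · omega
    intro I
    set SI : Finset (Fin k) := Finset.univ.filter (fun i => i ∈ I) with hSI
    refine ⟨(e SI : G), fun i => ?_⟩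
    have hmemA : ((e SI : G)) ∈ (A : Set G) := hA'sub (e SI).2
    have h1 : (e SI : G) ∈ X i ↔ (e SI : G) ∈ X i ∩ (A : Set G) :=
      ⟨fun h => ⟨h, hmemA⟩, fun h => h.1⟩
    rw [h1, hX2 i]
    simp only [hBdef, Finset.coe_image, Set.mem_image, Finset.mem_coe,
      Finset.mem_filter, Finset.mem_univ, true_and]
    constructor
    · rintro ⟨S, hS, hSe⟩
      have : S = SI := einj hSe
      rw [this] at hS
      rw [hSI, Finset.mem_filter] at hS
      exact hS.2
    · intro hi
      exact ⟨SI, by rw [hSI, Finset.mem_filter]; exact ⟨Finset.mem_univ i, hi⟩, rfl⟩
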